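/- arXiv:2412.19120 — 2 statements merged into one kernel-verified Lean document; each statement's English description precedes it below -/
import Mathlib

section
/- With the fusion axioms as above, for fusion-closed sets g and h, define g ⊔' h = { p | ∃ α ∈ g, ∃ β ∈ h, N α β p > 0 }. Then g ⊔' h is fusion-closed, contains both g and h, and is contained in every fusion-closed set containing both g and h; that is, g ⊔' h is the join of g and h in the lattice of fusion-closed sets. -/
/-- A subset of primaries is fusion-closed if it contains the vacuum and is
closed under the fusion product. -/
def FusionClosed {X : Type*} (N : X → X → X → ℕ) (v : X) (g : Set X) : Prop :=
  v ∈ g ∧ ∀ p ∈ g, ∀ q ∈ g, ∀ r, 0 < N p q r → r ∈ g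

theorem fusion_join_characterization
    (X : Type*) [Fintype X] [DecidableEq X] (N : X → X → X → ℕ) (v : X)
    (hunit : ∀ p q, N v p q = if p = q then 1 else 0)
    (hcomm : ∀ p q r, N p q r = N q p r)
    (hassoc : ∀ p q r s,
      (∑ t, N p q t * N t r s) = ∑ t, N q r t * N p t s)
    (g h : Set X) (hg : FusionClosed N v g) (hh : FusionClosed N v h) :
    FusionClosed N v {p | ∃ α ∈ g, ∃ β ∈ h, 0 < N α β p} ∧
    g ⊆ {p | ∃ α ∈ g, ∃ β ∈ h, 0 < N α β p} ∧
    h ⊆ {p | ∃ α ∈ g, ∃ β ∈ h, 0 < N α β p} ∧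
    ∀ k : Set X, FusionClosed N v k → g ⊆ k → h ⊆ k →
      {p | ∃ α ∈ g, ∃ β ∈ h, 0 < N α β p} ⊆ k := by
  -- reassociation helpers
  have key : ∀ p q r s a, 0 < N p q a → 0 < N a r s →
      ∃ t, 0 < N q r t ∧ 0 < N p t s := by
    intro p q r s a h1 h2
    have hle : N p q a * N a r s ≤ ∑ t, N p q t * N t r s :=
      Finset.single_le_sum (f := fun t => N p q t * N t r s) (fun i _ => Nat.zero_le _) (Finset.mem_univ a)
    have hpos : 0 < ∑ t, N q r t * N p t s := by
      rw [← hassoc]; exact lt_of_lt_of_le (Nat.mul_pos h1 h2) hle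
    obtain ⟨t, _, ht⟩ := Finset.exists_ne_zero_of_sum_ne_zero hpos.ne'
    rw [Nat.mul_ne_zero_iff] at ht
    exact ⟨t, Nat.pos_of_ne_zero ht.1, Nat.pos_of_ne_zero ht.2⟩
  have key' : ∀ p q r s a, 0 < N q r a → 0 < N p a s →
      ∃ t, 0 < N p q t ∧ 0 < N t r s := by
    intro p q r s a h1 h2
    have hle : N q r a * N p a s ≤ ∑ t, N q r t * N p t s :=
      Finset.single_le_sum (f := fun t => N q r t * N p t s) (fun i _ => Nat.zero_le _) (Finset.mem_univ a)
    have hpos : 0 < ∑ t, N p q t * N t r s := by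
      rw [hassoc]; exact lt_of_lt_of_le (Nat.mul_pos h1 h2) hle
    obtain ⟨t, _, ht⟩ := Finset.exists_ne_zero_of_sum_ne_zero hpos.ne'
    rw [Nat.mul_ne_zero_iff] at ht
    exact ⟨t, Nat.pos_of_ne_zero ht.1, Nat.pos_of_ne_zero ht.2⟩
  have hvv : (0:ℕ) < N v v v := by rw [hunit]; simp
  have hmemg : ∀ p ∈ g, p ∈ {p | ∃ α ∈ g, ∃ β ∈ h, 0 < N α β p} := by
    intro p hp
    exact ⟨p, hp, v, hh.1, by rw [hcomm, hunit]; simp⟩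
  have hmemh : ∀ p ∈ h, p ∈ {p | ∃ α ∈ g, ∃ β ∈ h, 0 < N α β p} := by
    intro p hp
    exact ⟨v, hg.1, p, hp, by rw [hunit]; simp⟩
  refine ⟨⟨⟨v, hg.1, v, hh.1, hvv⟩, ?_⟩, fun p hp => hmemg p hp,
    fun p hp => hmemh p hp, ?_⟩
  · rintro p ⟨α, hα, β, hβ, hp⟩ q ⟨γ, hγ, δ, hδ, hq⟩ r hr
    -- N α β p, N γ δ q, N p q r
    obtain ⟨t, ht1, ht2⟩ := key' p γ δ r q hq hr
    -- ht1 : N p γ t, ht2 : N t δ r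
    rw [hcomm] at ht1
    obtain ⟨u, hu1, hu2⟩ := key' γ α β t p hp ht1
    -- hu1 : 0 < N γ α u, hu2 : 0 < N u β t
    obtain ⟨w, hw1, hw2⟩ := key u β δ r t hu2 ht2
    exact ⟨u, hg.2 γ hγ α hα u hu1, w, hh.2 β hβ δ hδ w hw1, hw2⟩
  · rintro k hk hgk hhk p ⟨α, hα, β, hβ, hp⟩
    exact hk.2 α (hgk hα) β (hhk hβ) p hp
end

section
/- With the fusion axioms above (X finite, vacuum 0, fusion coefficients N with the unit, commutativity, associativity and charge-conjugation axioms), the join operation on fusion-closed sets satisfies: for fusion-closed g, h, and any α ∈ g, β ∈ h, and any primary r with N α β r > 0, we have r ∈ g ∨ h; and conversely every element of g ∨ h arises in this way. Moreover the join is associative: (g ∨ h) ∨ j = g ∨ (h ∨ j) for fusion-closed g, h, j. -/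
/-- The join of two fusion-closed sets. -/
def fusionJoin {X : Type*} (N : X → X → X → ℕ) (g h : Set X) : Set X :=
  {p | ∃ α ∈ g, ∃ β ∈ h, 0 < N α β p}

lemma sum_mul_pos_exists {X : Type*} [Fintype X] (f g : X → ℕ)
    (h : 0 < ∑ t, f t * g t) : ∃ t, 0 < f t ∧ 0 < g t := by
  by_contra hc
  push_neg at hc
  have : ∑ t, f t * g t = 0 := Finset.sum_eq_zero (fun t _ => by
    rcases Nat.eq_zero_or_pos (f t) with h0 | h0
    · simp [h0]
    · exact mul_eq_zero_of_right _ (by have := hc t h0; omega))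
  omega

lemma single_le_sum_nat {X : Type*} [Fintype X] (f : X → ℕ) (q : X) :
    f q ≤ ∑ t, f t :=
  Finset.single_le_sum (fun t _ => Nat.zero_le _) (Finset.mem_univ q)

theorem fusion_join_mem_and_assoc
    (X : Type*) [Fintype X] [DecidableEq X] (N : X → X → X → ℕ) (v : X)
    (conj : X → X) (hinv : Function.Involutive conj)
    (hunit : ∀ p q, N v p q = if p = q then 1 else 0)
    (hcomm : ∀ p q r, N p q r = N q p r)
    (hassoc : ∀ p q r s,
      (∑ t, N p q t * N t r s) = ∑ t, N q r t * N p t s)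
    (hconj : ∀ p q r, N p q (conj r) = N p r (conj q)) :
    (∀ g h : Set X, FusionClosed N v g → FusionClosed N v h →
      (∀ α ∈ g, ∀ β ∈ h, ∀ r, 0 < N α β r → r ∈ fusionJoin N g h) ∧
      (∀ p ∈ fusionJoin N g h, ∃ α ∈ g, ∃ β ∈ h, 0 < N α β p)) ∧
    (∀ g h j : Set X, FusionClosed N v g → FusionClosed N v h →
      FusionClosed N v j →
      fusionJoin N (fusionJoin N g h) j = fusionJoin N g (fusionJoin N h j)) := by
  have key : ∀ α β γ q p, 0 < N α β q → 0 < N q γ p →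
      ∃ t, 0 < N β γ t ∧ 0 < N α t p := by
    intro α β γ q p h1 h2
    have hsum : 0 < ∑ t, N α β t * N t γ p :=
      lt_of_lt_of_le (Nat.mul_pos h1 h2)
        (single_le_sum_nat (fun t => N α β t * N t γ p) q)
    rw [hassoc] at hsum
    exact sum_mul_pos_exists _ _ hsum
  constructor
  · intro g h hg hh
    refine ⟨fun α hα β hβ r hr => ⟨α, hα, β, hβ, hr⟩, fun p hp => hp⟩
  · intro g h j hg hh hj
    ext p
    constructor
    · rintro ⟨q, ⟨α, hα, β, hβ, h1⟩, γ, hγ, h2⟩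
      obtain ⟨t, ht1, ht2⟩ := key α β γ q p h1 h2
      exact ⟨α, hα, t, ⟨β, hβ, γ, hγ, ht1⟩, ht2⟩
    · rintro ⟨α, hα, q, ⟨β, hβ, γ, hγ, h1⟩, h2⟩
      -- N β γ q > 0, N α q p > 0. Need t with N α β t > 0, N t γ p > 0.
      -- Use hassoc in reverse: ∑ N α β t * N t γ p = ∑ N β γ t * N α t p ≥ N β γ q * N α q p > 0
      have hsum : 0 < ∑ t, N α β t * N t γ p := by
        rw [hassoc]
        exact lt_of_lt_of_le (Nat.mul_pos h1 h2)
          (single_le_sum_nat (fun t => N β γ t * N α t p) q)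
      obtain ⟨t, ht1, ht2⟩ := sum_mul_pos_exists _ _ hsum
      exact ⟨t, ⟨α, hα, β, hβ, ht1⟩, γ, hγ, ht2⟩
end
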